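/- Let A be the infinitesimal generator of a strongly continuous semigroup (T_t)_{t≥0} on a real Banach space X, and let μ(A) = sup_{v ∈ D(A), v ≠ 0} [Av, v]/‖v‖² be the logarithmic norm of A, assumed finite. Then for all t ≥ 0 and all x ∈ D(A), ‖T_t x‖ ≤ exp(t·μ(A))·‖x‖. -/

import Mathlib

open Filter Topology

/-- Right defined semi-inner-product. -/
noncomputable def sip {X : Type*} [NormedAddCommGroup X] [NormedSpace ℝ X] (u v : X) : ℝ :=
  (limUnder (𝓝[>] (0 : ℝ)) fun ε : ℝ => (‖v + ε • u‖ - ‖v‖) / ε) * ‖v‖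

lemma slope_monoOn {X : Type*} [NormedAddCommGroup X] [NormedSpace ℝ X] (y u : X) :
    MonotoneOn (fun h : ℝ => (‖y + h • u‖ - ‖y‖) / h) (Set.Ioi 0) := by
  intro h hh k hk hhk
  simp only [Set.mem_Ioi] at hh hk
  have key : k * ‖y + h • u‖ ≤ h * ‖y + k • u‖ + (k - h) * ‖y‖ := by
    have e : y + h • u = (h / k) • (y + k • u) + (1 - h / k) • y := by
      match_scalars <;> field_simp <;> ring
    have h1 : (0:ℝ) ≤ h / k := by positivity
    have h2 : (0:ℝ) ≤ 1 - h / k := by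
      rw [sub_nonneg, div_le_one hk]; exact hhk
    calc k * ‖y + h • u‖ = k * ‖(h / k) • (y + k • u) + (1 - h / k) • y‖ := by rw [← e]
      _ ≤ k * ((h/k) * ‖y + k • u‖ + (1 - h/k) * ‖y‖) := by
          refine mul_le_mul_of_nonneg_left ?_ hk.le
          refine (norm_add_le _ _).trans ?_
          rw [norm_smul, norm_smul, Real.norm_of_nonneg h1, Real.norm_of_nonneg h2]
      _ = h * ‖y + k • u‖ + (k - h) * ‖y‖ := by
          field_simp
  rw [div_le_div_iff₀ hh hk]
  nlinarith [key]

lemma slope_bddBelow {X : Type*} [NormedAddCommGroup X] [NormedSpace ℝ X] (y u : X) :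
    BddBelow ((fun h : ℝ => (‖y + h • u‖ - ‖y‖) / h) '' Set.Ioi 0) := by
  refine ⟨-‖u‖, ?_⟩
  rintro r ⟨h, hh, rfl⟩
  simp only [Set.mem_Ioi] at hh
  rw [le_div_iff₀ hh]
  have : ‖y‖ - ‖h • u‖ ≤ ‖y + h • u‖ := by
    have h3 := norm_sub_le (y + h • u) (h • u)
    simp only [add_sub_cancel_right] at h3
    linarith
  rw [norm_smul, Real.norm_of_nonneg hh.le] at this
  nlinarith

lemma slope_tendsto {X : Type*} [NormedAddCommGroup X] [NormedSpace ℝ X] (y u : X) :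
    ∃ L : ℝ, Tendsto (fun h : ℝ => (‖y + h • u‖ - ‖y‖) / h) (𝓝[>] (0:ℝ)) (𝓝 L) :=
  ⟨_, (slope_monoOn y u).tendsto_nhdsGT (slope_bddBelow y u)⟩

theorem semigroup_log_norm_bound {X : Type*} [NormedAddCommGroup X] [NormedSpace ℝ X]
    [CompleteSpace X]
    (T : ℝ → X →L[ℝ] X)
    (hT0 : T 0 = 1)
    (hTsem : ∀ s t : ℝ, 0 ≤ s → 0 ≤ t → T (s + t) = T s ∘L T t)
    (hTcont : ∀ x : X, Tendsto (fun t => T t x) (𝓝[>] (0 : ℝ)) (𝓝 x))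
    (domA : Set X) (A : X → X)
    (hdom : ∀ x : X, x ∈ domA ↔ ∃ y : X,
      Tendsto (fun h : ℝ => h⁻¹ • (T h x - x)) (𝓝[>] (0 : ℝ)) (𝓝 y))
    (hA : ∀ x ∈ domA,
      Tendsto (fun h : ℝ => h⁻¹ • (T h x - x)) (𝓝[>] (0 : ℝ)) (𝓝 (A x)))
    (μ : ℝ)
    (hμ : IsLUB {r : ℝ | ∃ v ∈ domA, v ≠ 0 ∧ r = sip (A v) v / ‖v‖ ^ 2} μ) :
    ∀ t : ℝ, 0 ≤ t → ∀ x ∈ domA, ‖T t x‖ ≤ Real.exp (t * μ) * ‖x‖ := by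
  intro t ht x hx
  -- Step 1: pointwise boundedness on [0, t]
  have hpt : ∀ z : X, ∃ M : ℝ, ∀ s ∈ Set.Icc (0:ℝ) t, ‖T s z‖ ≤ M := by
    intro z
    obtain ⟨δ, hδ0, hδ1⟩ := Metric.tendsto_nhdsWithin_nhds.mp (hTcont z) 1 one_pos
    set B := max 1 ‖T δ‖ with hB
    have hB1 : (1:ℝ) ≤ B := le_max_left _ _
    have hsmall : ∀ s : ℝ, 0 ≤ s → s < δ → ‖T s z‖ ≤ ‖z‖ + 1 := by
      intro s hs0 hsδ
      rcases eq_or_lt_of_le hs0 with h0 | h0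
      · have hz0 : ‖T s z‖ = ‖z‖ := by rw [← h0, hT0]; simp
        rw [hz0]; linarith
      · have := hδ1 (Set.mem_Ioi.mpr h0) (by rw [Real.dist_eq, sub_zero, abs_of_pos h0]; exact hsδ)
        rw [dist_eq_norm] at this
        have h4 := norm_sub_le (T s z) z
        have h5 : ‖T s z‖ - ‖z‖ ≤ ‖T s z - z‖ := by
          have := norm_sub_norm_le (T s z) z; linarith
        linarith
    have claim : ∀ n : ℕ, ∀ s : ℝ, 0 ≤ s → s ≤ n * δ → ‖T s z‖ ≤ B ^ n * (‖z‖ + 1) := by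
      intro n
      induction n with
      | zero =>
          intro s hs0 hsn
          simp only [Nat.cast_zero, zero_mul] at hsn
          have : s = 0 := le_antisymm hsn hs0
          subst this
          rw [hT0]
          simp only [pow_zero, one_mul, ContinuousLinearMap.one_apply]
          linarith [norm_nonneg z]
      | succ n ih =>
          intro s hs0 hsn
          by_cases hsδ : s < δ
          · have hb := hsmall s hs0 hsδ
            have hBn : (1:ℝ) ≤ B ^ (n+1) := one_le_pow₀ hB1
            nlinarith [norm_nonneg z]
          · push_neg at hsδ
            have hs' : 0 ≤ s - δ := by linarith
            have hsplit : T s = T δ ∘L T (s - δ) := by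
              have := hTsem δ (s - δ) hδ0.le hs'
              rwa [add_sub_cancel] at this
            have hsn' : s - δ ≤ n * δ := by
              push_cast at hsn ⊢
              linarith
            have ihs := ih (s - δ) hs' hsn'
            have : ‖T s z‖ ≤ ‖T δ‖ * ‖T (s - δ) z‖ := by
              rw [hsplit]; exact (T δ).le_opNorm _
            have hTδB : ‖T δ‖ ≤ B := le_max_right _ _
            have hnn : (0:ℝ) ≤ ‖T (s - δ) z‖ := norm_nonneg _
            have hBn : (0:ℝ) ≤ B ^ n := by positivity
            calc ‖T s z‖ ≤ ‖T δ‖ * ‖T (s - δ) z‖ := this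
              _ ≤ B * (B ^ n * (‖z‖ + 1)) := by
                  apply mul_le_mul hTδB ihs hnn (by linarith)
              _ = B ^ (n + 1) * (‖z‖ + 1) := by ring
    refine ⟨B ^ (⌈t / δ⌉₊) * (‖z‖ + 1), fun s hs => claim _ s hs.1 ?_⟩
    have h1 : t / δ ≤ (⌈t / δ⌉₊ : ℝ) := Nat.le_ceil _
    have h2 : t ≤ (⌈t / δ⌉₊ : ℝ) * δ := by
      rw [div_le_iff₀ hδ0] at h1; linarith
    linarith [hs.2]
  -- Step 2: Banach-Steinhaus
  obtain ⟨C', hC'⟩ := banach_steinhaus (g := fun i : Set.Icc (0:ℝ) t => T i.1)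
    (fun z => (hpt z).imp fun M hM => fun i => hM i.1 i.2)
  set C := max C' 1 with hCdef
  have hC1 : (1:ℝ) ≤ C := le_max_right _ _
  have hC0 : (0:ℝ) < C := lt_of_lt_of_le one_pos hC1
  have hC : ∀ s ∈ Set.Icc (0:ℝ) t, ‖T s‖ ≤ C := fun s hs =>
    le_trans (hC' ⟨s, hs⟩) (le_max_left _ _)
  -- Step 3: continuity of s ↦ T s x on [0, t]
  have hcont : ContinuousOn (fun s => T s x) (Set.Icc (0:ℝ) t) := by
    intro s hs
    rw [Metric.continuousWithinAt_iff]
    intro ε hε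
    obtain ⟨δ, hδ0, hδ1⟩ := Metric.tendsto_nhdsWithin_nhds.mp (hTcont x) (ε / C)
      (by positivity)
    refine ⟨δ, hδ0, ?_⟩
    intro s' hs' hdist
    have key : ∀ a b : ℝ, a ∈ Set.Icc (0:ℝ) t → b ∈ Set.Icc (0:ℝ) t → a < b → b - a < δ →
        dist (T b x) (T a x) < ε := by
      intro a b ha hb hab hd
      have h1 : T b = T a ∘L T (b - a) := by
        have := hTsem a (b - a) ha.1 (by linarith)
        rwa [add_sub_cancel] at this
      have h2 : dist (T b x) (T a x) = ‖T a (T (b - a) x - x)‖ := by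
        rw [dist_eq_norm, h1, ContinuousLinearMap.comp_apply, map_sub]
      have h3 := hδ1 (Set.mem_Ioi.mpr (by linarith : (0:ℝ) < b - a))
        (by rw [Real.dist_eq, sub_zero, abs_of_pos (by linarith)]; exact hd)
      rw [dist_eq_norm] at h3
      calc dist (T b x) (T a x) = ‖T a (T (b - a) x - x)‖ := h2
        _ ≤ ‖T a‖ * ‖T (b - a) x - x‖ := (T a).le_opNorm _
        _ ≤ C * ‖T (b - a) x - x‖ :=
            mul_le_mul_of_nonneg_right (hC a ha) (norm_nonneg _)
        _ < C * (ε / C) := by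
            exact mul_lt_mul_of_pos_left h3 hC0
        _ = ε := by field_simp
    rcases lt_trichotomy s' s with hlt | heq | hgt
    · rw [dist_comm]
      exact key s' s hs' hs hlt (by rw [Real.dist_eq] at hdist; cases abs_lt.mp hdist; linarith)
    · rw [heq]; simpa using hε
    · exact key s s' hs hs' hgt (by rw [Real.dist_eq] at hdist; cases abs_lt.mp hdist; linarith)
  have hfcont : ContinuousOn (fun s => ‖T s x‖) (Set.Icc (0:ℝ) t) :=
    continuous_norm.comp_continuousOn hcont
  -- Step 4: the right-slope estimate
  have hf' : ∀ s ∈ Set.Ico (0:ℝ) t, ∀ r, μ * ‖T s x‖ < r →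
      ∃ᶠ z in 𝓝[>] s, (z - s)⁻¹ * (‖T z x‖ - ‖T s x‖) < r := by
    intro s hs r hr
    set y := T s x with hy
    apply Filter.Eventually.frequently
    have hmap : Tendsto (fun z : ℝ => z - s) (𝓝[>] s) (𝓝[>] (0:ℝ)) := by
      refine tendsto_nhdsWithin_of_tendsto_nhds_of_eventually_within _ ?_ ?_
      · apply tendsto_nhdsWithin_of_tendsto_nhds
        have : Tendsto (fun z : ℝ => z - s) (𝓝 s) (𝓝 (s - s)) :=
          (continuous_id.sub continuous_const).tendsto s
        simpa using this
      · filter_upwards [self_mem_nhdsWithin] with z hz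
        exact Set.mem_Ioi.mpr (sub_pos.mpr hz)
    have hG : ∀ᶠ h in 𝓝[>] (0:ℝ), h⁻¹ * (‖T h y‖ - ‖y‖) < r := by
      by_cases hy0 : y = 0
      · have hr0 : (0:ℝ) < r := by
          have : μ * ‖y‖ = 0 := by rw [hy0, norm_zero, mul_zero]
          linarith
        refine Filter.Eventually.of_forall fun h => ?_
        rw [hy0]
        simpa using hr0
      · have hyd : y ∈ domA := by
          rw [hdom]
          refine ⟨T s (A x), ?_⟩
          have tends : Tendsto (fun h : ℝ => T s (h⁻¹ • (T h x - x))) (𝓝[>] (0:ℝ))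
              (𝓝 (T s (A x))) := ((T s).continuous.tendsto _).comp (hA x hx)
          refine tends.congr' ?_
          filter_upwards [self_mem_nhdsWithin] with h hh
          have hh' : (0:ℝ) < h := hh
          have e1 : T h y = T s (T h x) := by
            have e2 := hTsem h s hh'.le hs.1
            have e3 := hTsem s h hs.1 hh'.le
            rw [hy]
            calc T h (T s x) = T (h + s) x := by rw [e2]; rfl
              _ = T s (T h x) := by rw [add_comm, e3]; rfl
          rw [map_smul, map_sub, ← e1, ← hy]
        have hAy := hA y hyd
        obtain ⟨L, hL⟩ := slope_tendsto y (A y)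
        have hsip : sip (A y) y = L * ‖y‖ := by
          unfold sip
          rw [hL.limUnder_eq]
        have hy' : (0:ℝ) < ‖y‖ := norm_pos_iff.mpr hy0
        have hLμ : L ≤ μ * ‖y‖ := by
          have hmem : sip (A y) y / ‖y‖ ^ 2 ∈
              {r : ℝ | ∃ v ∈ domA, v ≠ 0 ∧ r = sip (A v) v / ‖v‖ ^ 2} := ⟨y, hyd, hy0, rfl⟩
          have h6 := hμ.1 hmem
          rw [hsip] at h6
          have h7 : L * ‖y‖ / ‖y‖ ^ 2 = L / ‖y‖ := by
            rw [pow_two]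
            field_simp
          rw [h7, div_le_iff₀ hy'] at h6
          linarith
        have herr : Tendsto (fun h : ℝ => ‖h⁻¹ • (T h y - y) - A y‖) (𝓝[>] (0:ℝ)) (𝓝 0) := by
          have h0 : Tendsto (fun h : ℝ => h⁻¹ • (T h y - y) - A y) (𝓝[>] (0:ℝ))
              (𝓝 (A y - A y)) := hAy.sub (tendsto_const_nhds (x := A y))
          rw [sub_self] at h0
          simpa using h0.norm
        have hcomb : Tendsto (fun h : ℝ =>
            (‖y + h • A y‖ - ‖y‖) / h + ‖h⁻¹ • (T h y - y) - A y‖) (𝓝[>] (0:ℝ))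
            (𝓝 (L + 0)) := hL.add herr
        rw [add_zero] at hcomb
        have hLr : L < r := lt_of_le_of_lt hLμ hr
        filter_upwards [hcomb.eventually_lt_const hLr, self_mem_nhdsWithin] with h h1 h2
        have hh : (0:ℝ) < h := h2
        have hb : h⁻¹ * (‖T h y‖ - ‖y‖) ≤
            (‖y + h • A y‖ - ‖y‖) / h + ‖h⁻¹ • (T h y - y) - A y‖ := by
          have e : T h y = (y + h • A y) + h • (h⁻¹ • (T h y - y) - A y) := by
            rw [smul_sub, smul_smul, mul_inv_cancel₀ hh.ne', one_smul]
            abel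
          have hn : ‖T h y‖ ≤ ‖y + h • A y‖ + h * ‖h⁻¹ • (T h y - y) - A y‖ := by
            conv_lhs => rw [e]
            refine (norm_add_le _ _).trans ?_
            rw [norm_smul, Real.norm_of_nonneg hh.le]
          calc h⁻¹ * (‖T h y‖ - ‖y‖)
              ≤ h⁻¹ * ((‖y + h • A y‖ + h * ‖h⁻¹ • (T h y - y) - A y‖) - ‖y‖) :=
                mul_le_mul_of_nonneg_left (by linarith) (inv_nonneg.mpr hh.le)
            _ = (‖y + h • A y‖ - ‖y‖) / h + ‖h⁻¹ • (T h y - y) - A y‖ := by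
                field_simp
                ring
        exact lt_of_le_of_lt hb h1
    have hev2 := hmap.eventually hG
    filter_upwards [hev2, self_mem_nhdsWithin] with z h1 h2
    have hz : s < z := h2
    have hsplit : T z = T (z - s) ∘L T s := by
      have := hTsem (z - s) s (by linarith) hs.1
      rwa [sub_add_cancel] at this
    have : T z x = T (z - s) y := by rw [hsplit, ContinuousLinearMap.comp_apply, ← hy]
    rw [this]
    exact h1
  -- Step 5: Gronwall
  have main := le_gronwallBound_of_liminf_deriv_right_le (f := fun s => ‖T s x‖)
    (f' := fun s => μ * ‖T s x‖) (δ := ‖x‖) (K := μ) (ε := 0) (a := 0) (b := t)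
    hfcont hf' (by show ‖T 0 x‖ ≤ ‖x‖; rw [hT0]; simp) (fun s _ => by simp) t (Set.mem_Icc.mpr ⟨ht, le_refl t⟩)
  rw [sub_zero, gronwallBound_ε0] at main
  calc ‖T t x‖ ≤ ‖x‖ * Real.exp (μ * t) := main
    _ = Real.exp (t * μ) * ‖x‖ := by rw [mul_comm μ t]; ring
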